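/- Let G₁ and G₂ be finite phylogenetic networks and let ℓ be a leaf of G₁. Let G be the finite phylogenetic network obtained from the disjoint union of G₁ and G₂ by identifying ℓ with the root of G₂. Then B₂(G) = B₂(G₁) + p_ℓ · B₂(G₂), where p_ℓ is the probability, computed in G₁, that the directed random walk from the root of G₁ ends in ℓ. -/

import Mathlib

/-!
Grafting property of the B₂ index (Proposition "grafting property", finite case).

A finite phylogenetic network is modelled as a finite vertex type `V` together with
an edge-multiplicity function `adj : V → V → ℕ` and a distinguished vertex `root`;
`IsPhylo` states that the digraph is acyclic, that the root has in-degree 0, and that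
every vertex is reachable from the root.  For a vertex `v`, `pvisit G v` is the sum,
over all directed paths from the root to `v`, of the product of `1/d⁺` along the path
(paths in a DAG on `V` have fewer than `card V` edges, so the truncated sum is exact),
and `B2 G` is the entropy `-∑_{leaves ℓ} p_ℓ log₂ p_ℓ`.
-/

open Finset Filter

namespace GalledB2

structure Net (V : Type*) where
  adj : V → V → ℕ
  root : V

def IsPhylo {V : Type*} (G : Net V) : Prop :=
  (∀ v, ¬ Relation.TransGen (fun a b => 0 < G.adj a b) v v) ∧
  (∀ u, G.adj u G.root = 0) ∧
  (∀ v, Relation.ReflTransGen (fun a b => 0 < G.adj a b) G.root v)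

variable {V : Type*} [Fintype V]

def outDeg (G : Net V) (v : V) : ℕ := ∑ u, G.adj v u

def inDeg (G : Net V) (v : V) : ℕ := ∑ u, G.adj u v

def IsLeaf (G : Net V) (v : V) : Prop := outDeg G v = 0

open Classical in
/-- The probability that the directed random walk started at the root visits `v`:
the sum over all directed paths from the root to `v` of `∏ 1/d⁺` along the path. -/
noncomputable def pvisit (G : Net V) (v : V) : ℝ :=
  ∑ j ∈ Finset.range (Fintype.card V), ∑ f : Fin (j + 1) → V,
    if f 0 = G.root ∧ f (Fin.last j) = v then
      ∏ i : Fin j, (G.adj (f i.castSucc) (f i.succ) : ℝ) / (outDeg G (f i.castSucc) : ℝ)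
    else 0

open Classical in
/-- The B₂ index of a finite phylogenetic network. -/
noncomputable def B2 (G : Net V) : ℝ :=
  - ∑ v ∈ Finset.univ.filter (fun v => IsLeaf G v),
      pvisit G v * Real.logb 2 (pvisit G v)

/-! ### Auxiliary: step probabilities and the recursive path weight -/

noncomputable def step (G : Net V) (u v : V) : ℝ :=
  (G.adj u v : ℝ) / (outDeg G u : ℝ)

lemma step_def (G : Net V) (u v : V) :
    (G.adj u v : ℝ) / (outDeg G u : ℝ) = step G u v := rfl

open Classical in
noncomputable def q (G : Net V) : ℕ → V → ℝ
  | 0 => fun v => if v = G.root then 1 else 0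
  | j + 1 => fun v => ∑ u, q G j u * step G u v

lemma step_nonneg (G : Net V) (u v : V) : 0 ≤ step G u v :=
  div_nonneg (Nat.cast_nonneg _) (Nat.cast_nonneg _)

lemma q_nonneg (G : Net V) : ∀ j v, 0 ≤ q G j v
  | 0, v => by unfold q; split <;> norm_num
  | j + 1, v =>
    Finset.sum_nonneg fun u _ => mul_nonneg (q_nonneg G j u) (step_nonneg G u v)

lemma adj_le_outDeg (G : Net V) (u v : V) : G.adj u v ≤ outDeg G u :=
  Finset.single_le_sum (f := fun w => G.adj u w) (fun i _ => Nat.zero_le _) (mem_univ v)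

lemma adj_pos_of_step_ne_zero {G : Net V} {u v : V} (h : step G u v ≠ 0) :
    0 < G.adj u v := by
  rcases Nat.eq_zero_or_pos (G.adj u v) with h0 | h0
  · exact absurd (by simp [step, h0]) h
  · exact h0

lemma step_eq_zero_of_adj {G : Net V} {u v : V} (h : G.adj u v = 0) : step G u v = 0 := by
  simp [step, h]

lemma sum_step (G : Net V) (u : V) :
    ∑ v, step G u v = if outDeg G u = 0 then 0 else 1 := by
  rcases eq_or_ne (outDeg G u) 0 with h | h
  · have hz : ∀ v, G.adj u v = 0 := fun v => Nat.le_zero.mp (h ▸ adj_le_outDeg G u v)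
    simp [step, hz, h]
  · rw [if_neg h]
    unfold step
    rw [← Finset.sum_div, ← Nat.cast_sum]
    exact div_self (Nat.cast_ne_zero.mpr h)

open Classical in
lemma inner_eq_q (G : Net V) : ∀ (j : ℕ) (v : V),
    (∑ f : Fin (j + 1) → V,
      if f 0 = G.root ∧ f (Fin.last j) = v then
        ∏ i : Fin j, step G (f i.castSucc) (f i.succ)
      else 0) = q G j v := by
  intro j
  induction j with
  | zero =>
    intro v
    rw [Fintype.sum_equiv (Equiv.funUnique (Fin 1) V)
      _ (fun x : V => if x = G.root ∧ x = v then (1 : ℝ) else 0)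
      (fun f => by simp [Equiv.funUnique])]
    unfold q
    by_cases h : v = G.root
    · subst h; simp
    · rw [if_neg h]
      refine Finset.sum_eq_zero fun x _ => ?_
      rw [if_neg]
      rintro ⟨h1, h2⟩
      exact h (h2.symm.trans h1)
  | succ j ih =>
    intro v
    have key : ∀ (g : Fin (j+1) → V) (T : V → ℝ),
        (∑ x, if g 0 = G.root ∧ g (Fin.last j) = x then T x else 0)
          = if g 0 = G.root then T (g (Fin.last j)) else 0 := by
      intro g T
      by_cases hA : g 0 = G.root
      · simp [hA]
      · simp [hA]
    have key' : ∀ (g : Fin (j+1) → V) (T : V → ℝ),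
        (∑ x, if g 0 = G.root ∧ x = v then T x else 0)
          = if g 0 = G.root then T v else 0 := by
      intro g T
      by_cases hA : g 0 = G.root
      · simp [hA]
      · simp [hA]
    show _ = ∑ u, q G j u * step G u v
    have rhs : ∑ u, q G j u * step G u v
        = ∑ g : Fin (j+1) → V,
            if g 0 = G.root then
              (∏ i : Fin j, step G (g i.castSucc) (g i.succ)) * step G (g (Fin.last j)) v
            else 0 := by
      have e1 : ∑ u, q G j u * step G u v
          = ∑ u, ∑ g : Fin (j+1) → V,
              (if g 0 = G.root ∧ g (Fin.last j) = u then
                ∏ i : Fin j, step G (g i.castSucc) (g i.succ) else 0) * step G u v := by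
        refine Finset.sum_congr rfl fun u _ => ?_
        rw [← ih u, Finset.sum_mul]
      rw [e1, Finset.sum_comm]
      refine Finset.sum_congr rfl fun g _ => ?_
      rw [← key g (fun x => (∏ i : Fin j, step G (g i.castSucc) (g i.succ)) * step G x v)]
      refine Finset.sum_congr rfl fun u _ => ?_
      rw [ite_mul, zero_mul]
    rw [rhs]
    rw [← Equiv.sum_comp (Fin.snocEquiv (fun _ => V))]
    rw [Fintype.sum_prod_type]
    rw [Finset.sum_comm]
    refine Finset.sum_congr rfl fun g _ => ?_
    have trans : ∀ x : V,
        (if (Fin.snocEquiv (fun _ => V)) (x, g) 0 = G.root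
            ∧ (Fin.snocEquiv (fun _ => V)) (x, g) (Fin.last (j+1)) = v then
          ∏ i : Fin (j+1), step G ((Fin.snocEquiv (fun _ => V)) (x, g) i.castSucc)
            ((Fin.snocEquiv (fun _ => V)) (x, g) i.succ)
        else 0)
        = if g 0 = G.root ∧ x = v then
            (∏ i : Fin j, step G (g i.castSucc) (g i.succ)) * step G (g (Fin.last j)) x
          else 0 := by
      intro x
      have hsnoc0 : Fin.snoc (α := fun _ => V) g x 0 = g 0 := by
        have h0 : (0 : Fin (j+2)) = Fin.castSucc (0 : Fin (j+1)) := by simp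
        rw [h0, Fin.snoc_castSucc]
      have hprod :
          (∏ i : Fin (j+1), step G (Fin.snoc (α := fun _ => V) g x i.castSucc)
              (Fin.snoc (α := fun _ => V) g x i.succ))
          = (∏ i : Fin j, step G (g i.castSucc) (g i.succ)) * step G (g (Fin.last j)) x := by
        rw [Fin.prod_univ_castSucc]
        congr 1
        · refine Finset.prod_congr rfl fun i _ => ?_
          rw [Fin.succ_castSucc, Fin.snoc_castSucc, Fin.snoc_castSucc]
        · rw [Fin.succ_last, Fin.snoc_castSucc, Fin.snoc_last]
      simp only [Fin.snocEquiv_apply, hsnoc0, Fin.snoc_last, hprod]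
    rw [Finset.sum_congr rfl fun x _ => trans x]
    rw [key' g (fun x => (∏ i : Fin j, step G (g i.castSucc) (g i.succ)) * step G (g (Fin.last j)) x)]

open Classical in
lemma pvisit_eq_sum_q (G : Net V) (v : V) :
    pvisit G v = ∑ j ∈ Finset.range (Fintype.card V), q G j v := by
  unfold pvisit
  refine Finset.sum_congr rfl fun j _ => ?_
  rw [← inner_eq_q G j v]; rfl

/-! ### Vanishing beyond the number of vertices, and conservation -/

open Classical in
lemma q_zero (G : Net V) (v : V) : q G 0 v = if v = G.root then 1 else 0 := rfl

lemma q_succ (G : Net V) (j : ℕ) (v : V) :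
    q G (j + 1) v = ∑ u, q G j u * step G u v := rfl

lemma q_chain (G : Net V) : ∀ (j : ℕ) (v : V), q G j v ≠ 0 →
    ∃ f : Fin (j + 1) → V, f 0 = G.root ∧ f (Fin.last j) = v ∧
      ∀ i : Fin j, 0 < G.adj (f i.castSucc) (f i.succ) := by
  intro j
  induction j with
  | zero =>
    intro v hv
    refine ⟨fun _ => v, ?_, rfl, fun i => i.elim0⟩
    rw [q_zero] at hv
    by_cases h : v = G.root
    · exact h
    · simp [h] at hv
  | succ j ih =>
    intro v hv
    rw [q_succ] at hv
    obtain ⟨u, -, hu⟩ := Finset.exists_ne_zero_of_sum_ne_zero hv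
    have hq : q G j u ≠ 0 := fun h => hu (by simp [h])
    have hs : step G u v ≠ 0 := fun h => hu (by simp [h])
    obtain ⟨f, hf0, hfl, hstep⟩ := ih u hq
    refine ⟨Fin.snoc f v, ?_, by simp, ?_⟩
    · have h0 : (0 : Fin (j+2)) = Fin.castSucc (0 : Fin (j+1)) := by simp
      rw [h0, Fin.snoc_castSucc]; exact hf0
    · intro i
      refine Fin.lastCases ?_ ?_ i
      · rw [Fin.succ_last, Fin.snoc_castSucc, Fin.snoc_last, hfl]
        exact adj_pos_of_step_ne_zero hs
      · intro k
        rw [Fin.succ_castSucc, Fin.snoc_castSucc, Fin.snoc_castSucc]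
        exact hstep k

lemma q_eq_zero_of_card_le {G : Net V}
    (hac : ∀ v, ¬ Relation.TransGen (fun a b => 0 < G.adj a b) v v)
    {j : ℕ} (hj : Fintype.card V ≤ j) (v : V) : q G j v = 0 := by
  by_contra hv
  obtain ⟨f, -, -, hstep⟩ := q_chain G j v hv
  have mono : ∀ b a : Fin (j+1), a < b →
      Relation.TransGen (fun a b => 0 < G.adj a b) (f a) (f b) := by
    intro b
    induction b using Fin.induction with
    | zero => intro a ha; exact absurd ha (Fin.not_lt_zero a)
    | succ i ihb =>
      intro a ha
      rcases lt_or_eq_of_le (Fin.le_castSucc_iff.mpr ha) with h | h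
      · exact (ihb a h).tail (hstep i)
      · rw [h]
        exact Relation.TransGen.single (hstep i)
  have finj : Function.Injective f := by
    intro a b hab
    by_contra hne
    rcases lt_or_gt_of_ne hne with h | h
    · exact hac (f a) (hab ▸ mono b a h)
    · exact hac (f b) (hab ▸ mono a b h)
  have := Fintype.card_le_of_injective f finj
  simp [Fintype.card_fin] at this
  omega

open Classical in
lemma sum_q_eq (G : Net V) : ∀ n : ℕ,
    (∑ v, q G n v)
      = 1 - ∑ k ∈ Finset.range n, ∑ v ∈ Finset.univ.filter (fun v => IsLeaf G v), q G k v := by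
  intro n
  induction n with
  | zero => simp [q_zero, Finset.filter_eq']
  | succ n ih =>
    have e1 : (∑ v, q G (n+1) v) = ∑ u, q G n u * ∑ v, step G u v := by
      rw [Finset.sum_congr rfl fun v (_ : v ∈ Finset.univ) => q_succ G n v, Finset.sum_comm]
      exact Finset.sum_congr rfl fun u _ => (Finset.mul_sum _ _ _).symm
    have hl : ∑ u ∈ Finset.univ.filter (fun v => IsLeaf G v),
        (q G n u * ∑ v, step G u v) = 0 :=
      Finset.sum_eq_zero fun u hu => by
        have h2 : outDeg G u = 0 := (Finset.mem_filter.mp hu).2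
        rw [sum_step, if_pos h2, mul_zero]
    have hnl : ∑ u ∈ Finset.univ.filter (fun v => ¬ IsLeaf G v),
        (q G n u * ∑ v, step G u v)
        = ∑ u ∈ Finset.univ.filter (fun v => ¬ IsLeaf G v), q G n u :=
      Finset.sum_congr rfl fun u hu => by
        have h2 : ¬ outDeg G u = 0 := (Finset.mem_filter.mp hu).2
        rw [sum_step, if_neg h2, mul_one]
    have e2 : (∑ v, q G (n+1) v)
        = (∑ u, q G n u) - ∑ u ∈ Finset.univ.filter (fun v => IsLeaf G v), q G n u := by
      rw [e1, ← Finset.sum_filter_add_sum_filter_not Finset.univ (fun v => IsLeaf G v)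
        (fun u => q G n u * ∑ v, step G u v), hl, hnl, zero_add,
        ← Finset.sum_filter_add_sum_filter_not Finset.univ (fun v => IsLeaf G v)
        (fun u => q G n u)]
      ring
    rw [e2, ih, Finset.sum_range_succ]
    ring

open Classical in
lemma sum_leaf_pvisit (G : Net V)
    (hac : ∀ v, ¬ Relation.TransGen (fun a b => 0 < G.adj a b) v v) :
    ∑ v ∈ Finset.univ.filter (fun v => IsLeaf G v), pvisit G v = 1 := by
  have h0 : (∑ v, q G (Fintype.card V) v) = 0 :=
    Finset.sum_eq_zero fun v _ => q_eq_zero_of_card_le hac le_rfl v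
  have hq := sum_q_eq G (Fintype.card V)
  rw [h0] at hq
  rw [Finset.sum_congr rfl fun v (_ : v ∈ _) => pvisit_eq_sum_q G v, Finset.sum_comm]
  linarith

/-! ### Generic summation utilities -/

open Classical in
lemma sum_split_ne {α : Type*} [Fintype α] {M : Type*} [AddCommMonoid M] (a : α) (F : α → M) :
    ∑ x, F x = F a + ∑ x : {x : α // x ≠ a}, F x.1 := by
  classical
  rw [← Finset.add_sum_erase Finset.univ F (Finset.mem_univ a)]
  congr 1
  exact Finset.sum_subtype (Finset.univ.erase a) (fun x => by simp) F

lemma sum_range_extend {a : ℕ → ℝ} {A M : ℕ} (h : ∀ j, A ≤ j → a j = 0) (hAM : A ≤ M) :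
    ∑ j ∈ Finset.range M, a j = ∑ j ∈ Finset.range A, a j :=
  (Finset.sum_subset (Finset.range_subset_range.mpr hAM)
    (fun x _ hx => h x (by simpa using hx))).symm

lemma cauchy_finite {a b : ℕ → ℝ} {A B M : ℕ} (hA : ∀ j, A ≤ j → a j = 0)
    (hB : ∀ j, B ≤ j → b j = 0) (hM : A + B ≤ M + 1) :
    ∑ j ∈ Finset.range M, ∑ p ∈ Finset.HasAntidiagonal.antidiagonal j, a p.1 * b p.2
      = (∑ j ∈ Finset.range A, a j) * (∑ j ∈ Finset.range B, b j) := by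
  rcases Nat.eq_zero_or_pos A with hA0 | hApos
  · have ha0 : ∀ j, a j = 0 := fun j => hA j (hA0 ▸ Nat.zero_le j)
    simp [ha0]
  rcases Nat.eq_zero_or_pos B with hB0 | hBpos
  · have hb0 : ∀ j, b j = 0 := fun j => hB j (hB0 ▸ Nat.zero_le j)
    simp [hb0]
  have hAM : A ≤ M := by omega
  have hBM : B ≤ M := by omega
  rw [← sum_range_extend hA hAM, ← sum_range_extend hB hBM]
  rw [Finset.sum_mul]
  rw [Finset.sum_congr rfl fun j (_ : j ∈ Finset.range M) => Finset.mul_sum (Finset.range M) b (a j)]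
  rw [← Finset.sum_product']
  have hdisj : (Finset.range M : Set ℕ).PairwiseDisjoint Finset.HasAntidiagonal.antidiagonal := by
    intro x _ y _ hxy
    simp only [Finset.disjoint_left]
    intro p hp hp'
    exact hxy ((Finset.HasAntidiagonal.mem_antidiagonal.mp hp).symm.trans (Finset.HasAntidiagonal.mem_antidiagonal.mp hp'))
  rw [← Finset.sum_biUnion hdisj]
  apply Finset.sum_subset
  · intro p hp
    obtain ⟨j, hj, hpj⟩ := Finset.mem_biUnion.mp hp
    have := Finset.HasAntidiagonal.mem_antidiagonal.mp hpj
    simp only [Finset.mem_product, Finset.mem_range] at *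
    omega
  · intro p hp hnp
    simp only [Finset.mem_product, Finset.mem_range] at hp
    have hge : M ≤ p.1 + p.2 := by
      by_contra hlt
      push_neg at hlt
      exact hnp (Finset.mem_biUnion.mpr ⟨p.1 + p.2, Finset.mem_range.mpr hlt,
        Finset.HasAntidiagonal.mem_antidiagonal.mpr rfl⟩)
    rcases le_or_gt A p.1 with h | h
    · rw [hA p.1 h, zero_mul]
    · rw [hB p.2 (by omega), mul_zero]

lemma phi_mul {a b : ℝ} (ha : 0 ≤ a) (hb : 0 ≤ b) :
    (a * b) * Real.logb 2 (a * b)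
      = b * (a * Real.logb 2 a) + a * (b * Real.logb 2 b) := by
  rcases eq_or_lt_of_le ha with rfl | ha'
  · simp
  rcases eq_or_lt_of_le hb with rfl | hb'
  · simp
  rw [Real.logb_mul (ne_of_gt ha') (ne_of_gt hb')]
  ring

lemma pvisit_nonneg (G : Net V) (v : V) : 0 ≤ pvisit G v := by
  rw [pvisit_eq_sum_q]
  exact Finset.sum_nonneg fun j _ => q_nonneg G j v

/-! ### Glue structure -/

lemma glue_bijective {V₁ V₂ V : Type*}
    (ℓ : V₁) (r : V₂) (i₁ : V₁ → V) (i₂ : V₂ → V)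
    (hi₁ : Function.Injective i₁) (hi₂ : Function.Injective i₂)
    (hcov : ∀ v : V, (∃ u, i₁ u = v) ∨ ∃ u, i₂ u = v)
    (hglue : ∀ u₁ u₂, i₁ u₁ = i₂ u₂ ↔ u₁ = ℓ ∧ u₂ = r) :
    Function.Bijective (Sum.elim i₁ (fun w : {w : V₂ // w ≠ r} => i₂ w.1)) := by
  constructor
  · rintro (a | a) (b | b) h <;> simp only [Sum.elim_inl, Sum.elim_inr] at h
    · rw [hi₁ h]
    · exact absurd ((hglue a b.1).mp h).2 b.2
    · exact absurd ((hglue b a.1).mp h.symm).2 a.2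
    · rw [Subtype.ext (hi₂ h)]
  · intro x
    rcases hcov x with ⟨u, rfl⟩ | ⟨u, rfl⟩
    · exact ⟨Sum.inl u, rfl⟩
    · by_cases hu : u = r
      · subst hu
        exact ⟨Sum.inl ℓ, (hglue ℓ u).mpr ⟨rfl, rfl⟩⟩
      · exact ⟨Sum.inr ⟨u, hu⟩, rfl⟩

open Classical in
lemma glue_sum_split {V₁ V₂ V : Type*} [Fintype V₁] [Fintype V₂] [Fintype V]
    (ℓ : V₁) (r : V₂) (i₁ : V₁ → V) (i₂ : V₂ → V)
    (hi₁ : Function.Injective i₁) (hi₂ : Function.Injective i₂)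
    (hcov : ∀ v : V, (∃ u, i₁ u = v) ∨ ∃ u, i₂ u = v)
    (hglue : ∀ u₁ u₂, i₁ u₁ = i₂ u₂ ↔ u₁ = ℓ ∧ u₂ = r)
    {M : Type*} [AddCommMonoid M] (F : V → M) :
    ∑ x, F x = (∑ v, F (i₁ v)) + ∑ w : {w : V₂ // w ≠ r}, F (i₂ w.1) := by
  rw [← Equiv.sum_comp (Equiv.ofBijective _
      (glue_bijective ℓ r i₁ i₂ hi₁ hi₂ hcov hglue)) F]
  rw [Fintype.sum_sum_type]
  rfl

open Classical in
lemma glue_card {V₁ V₂ V : Type*} [Fintype V₁] [Fintype V₂] [Fintype V]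
    (ℓ : V₁) (r : V₂) (i₁ : V₁ → V) (i₂ : V₂ → V)
    (hi₁ : Function.Injective i₁) (hi₂ : Function.Injective i₂)
    (hcov : ∀ v : V, (∃ u, i₁ u = v) ∨ ∃ u, i₂ u = v)
    (hglue : ∀ u₁ u₂, i₁ u₁ = i₂ u₂ ↔ u₁ = ℓ ∧ u₂ = r) :
    Fintype.card V + 1 = Fintype.card V₁ + Fintype.card V₂ := by
  have hc := Fintype.card_congr
    (Equiv.ofBijective _ (glue_bijective ℓ r i₁ i₂ hi₁ hi₂ hcov hglue))
  rw [Fintype.card_sum] at hc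
  have h2 : Fintype.card {w : V₂ // w ≠ r} = Fintype.card V₂ - 1 := by
    have h := Fintype.card_subtype_compl (fun w : V₂ => w = r)
    rw [Fintype.card_subtype_eq] at h
    exact h
  have h3 : 0 < Fintype.card V₂ := Fintype.card_pos_iff.mpr ⟨r⟩
  omega

open Classical in
lemma glue_main {V₁ V₂ V : Type*} [Fintype V₁] [Fintype V₂] [Fintype V]
    (G₁ : Net V₁) (G₂ : Net V₂) (G : Net V)
    (h₁ : IsPhylo G₁) (h₂ : IsPhylo G₂)
    (ℓ : V₁) (hℓ : IsLeaf G₁ ℓ)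
    (i₁ : V₁ → V) (i₂ : V₂ → V)
    (hi₁ : Function.Injective i₁) (hi₂ : Function.Injective i₂)
    (hcov : ∀ v : V, (∃ u, i₁ u = v) ∨ ∃ u, i₂ u = v)
    (hglue : ∀ u₁ u₂, i₁ u₁ = i₂ u₂ ↔ u₁ = ℓ ∧ u₂ = G₂.root)
    (hroot : G.root = i₁ G₁.root)
    (hadj₁ : ∀ u v, G.adj (i₁ u) (i₁ v) = G₁.adj u v)
    (hadj₂ : ∀ u v, G.adj (i₂ u) (i₂ v) = G₂.adj u v)
    (hedges : ∀ a b, 0 < G.adj a b →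
      ((∃ u, i₁ u = a) ∧ ∃ v, i₁ v = b) ∨ ((∃ u, i₂ u = a) ∧ ∃ v, i₂ v = b)) :
    (∀ v, pvisit G (i₁ v) = pvisit G₁ v) ∧
    (∀ w, pvisit G (i₂ w) = pvisit G₁ ℓ * pvisit G₂ w) ∧
    (∀ v, v ≠ ℓ → (IsLeaf G (i₁ v) ↔ IsLeaf G₁ v)) ∧
    (∀ w, (IsLeaf G (i₂ w) ↔ IsLeaf G₂ w)) := by
  have split := glue_sum_split ℓ G₂.root i₁ i₂ hi₁ hi₂ hcov hglue (M := ℝ)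
  have splitN := glue_sum_split ℓ G₂.root i₁ i₂ hi₁ hi₂ hcov hglue (M := ℕ)
  have hcard := glue_card ℓ G₂.root i₁ i₂ hi₁ hi₂ hcov hglue
  have houtℓ : outDeg G₁ ℓ = 0 := hℓ
  have hadjℓ : ∀ u, G₁.adj ℓ u = 0 := by
    intro u
    have h := adj_le_outDeg G₁ ℓ u
    rw [houtℓ] at h
    omega
  have hIR : i₁ ℓ = i₂ G₂.root := (hglue ℓ G₂.root).mpr ⟨rfl, rfl⟩
  have c12 : ∀ (u : V₁) (w : V₂), u ≠ ℓ → w ≠ G₂.root → G.adj (i₁ u) (i₂ w) = 0 := by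
    intro u w hu hw
    by_contra h
    rcases hedges _ _ (Nat.pos_of_ne_zero h) with ⟨-, ⟨x, hx⟩⟩ | ⟨⟨y, hy⟩, -⟩
    · exact hw ((hglue x w).mp hx).2
    · exact hu ((hglue u y).mp hy.symm).1
  have c21 : ∀ (w : V₂) (u : V₁), w ≠ G₂.root → G.adj (i₂ w) (i₁ u) = 0 := by
    intro w u hw
    by_contra h
    rcases hedges _ _ (Nat.pos_of_ne_zero h) with ⟨⟨x, hx⟩, -⟩ | ⟨-, ⟨y, hy⟩⟩
    · exact hw ((hglue x w).mp hx).2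
    · have hy2 := (hglue u y).mp hy.symm
      rw [← hy, hy2.2] at h
      exact h (by rw [hadj₂, h₂.2.1 w])
  have hout₁ : ∀ v : V₁, v ≠ ℓ → outDeg G (i₁ v) = outDeg G₁ v := by
    intro v hv
    show (∑ x, G.adj (i₁ v) x) = outDeg G₁ v
    rw [splitN (fun x => G.adj (i₁ v) x)]
    have hz : ∑ w : {w : V₂ // w ≠ G₂.root}, G.adj (i₁ v) (i₂ w.1) = 0 :=
      Finset.sum_eq_zero fun w _ => c12 v w.1 hv w.2
    rw [hz, add_zero]
    exact Finset.sum_congr rfl fun u _ => hadj₁ v u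
  have hout₂ : ∀ w : V₂, outDeg G (i₂ w) = outDeg G₂ w := by
    intro w
    show (∑ x, G.adj (i₂ w) x) = outDeg G₂ w
    rw [splitN (fun x => G.adj (i₂ w) x)]
    have hz : ∑ u : V₁, G.adj (i₂ w) (i₁ u) = 0 := by
      refine Finset.sum_eq_zero fun u _ => ?_
      by_cases hw : w = G₂.root
      · subst hw
        rw [← hIR, hadj₁]
        exact hadjℓ u
      · exact c21 w u hw
    rw [hz, zero_add]
    have hsp : outDeg G₂ w
        = G₂.adj w G₂.root + ∑ w' : {w' : V₂ // w' ≠ G₂.root}, G₂.adj w w'.1 :=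
      sum_split_ne G₂.root (fun x => G₂.adj w x)
    rw [hsp, h₂.2.1 w, zero_add]
    exact Finset.sum_congr rfl fun w' _ => hadj₂ w w'.1
  have hstep₁ : ∀ u v : V₁, step G (i₁ u) (i₁ v) = step G₁ u v := by
    intro u v
    by_cases hu : u = ℓ
    · subst hu
      rw [step_eq_zero_of_adj (by rw [hadj₁]; exact hadjℓ v),
        step_eq_zero_of_adj (hadjℓ v)]
    · unfold step
      rw [hadj₁, hout₁ u hu]
  have hstep₂ : ∀ u v : V₂, step G (i₂ u) (i₂ v) = step G₂ u v := by
    intro u v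
    unfold step
    rw [hadj₂, hout₂ u]
  have hstep12 : ∀ (u : V₁) (w : V₂), u ≠ ℓ → w ≠ G₂.root → step G (i₁ u) (i₂ w) = 0 :=
    fun u w hu hw => step_eq_zero_of_adj (c12 u w hu hw)
  have hstep21 : ∀ (w : V₂) (u : V₁), w ≠ G₂.root → step G (i₂ w) (i₁ u) = 0 :=
    fun w u hw => step_eq_zero_of_adj (c21 w u hw)
  have q2root : ∀ j, q G₂ j G₂.root = if j = 0 then 1 else 0 := by
    intro j
    cases j with
    | zero => rw [q_zero, if_pos rfl, if_pos rfl]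
    | succ j =>
      rw [q_succ, if_neg (Nat.succ_ne_zero j)]
      exact Finset.sum_eq_zero fun u _ => by
        rw [step_eq_zero_of_adj (h₂.2.1 u), mul_zero]
  have main : ∀ j : ℕ, (∀ v : V₁, q G j (i₁ v) = q G₁ j v) ∧
      (∀ w : V₂, q G j (i₂ w)
        = ∑ p ∈ Finset.HasAntidiagonal.antidiagonal j, q G₁ p.1 ℓ * q G₂ p.2 w) := by
    intro j
    induction j with
    | zero =>
      constructor
      · intro v
        rw [q_zero, q_zero, hroot]
        by_cases h : v = G₁.root
        · rw [if_pos h, if_pos (by rw [h])]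
        · rw [if_neg h, if_neg (fun hh => h (hi₁ hh))]
      · intro w
        rw [Finset.Nat.antidiagonal_zero, Finset.sum_singleton, q_zero, q_zero, q_zero, hroot]
        have hiff : i₂ w = i₁ G₁.root ↔ (G₁.root = ℓ ∧ w = G₂.root) :=
          ⟨fun h => (hglue _ _).mp h.symm, fun h => ((hglue _ _).mpr h).symm⟩
        by_cases h1 : G₁.root = ℓ
        · by_cases h2 : w = G₂.root
          · rw [if_pos (hiff.mpr ⟨h1, h2⟩), if_pos h1.symm, if_pos h2, mul_one]
          · rw [if_neg (fun hh => h2 (hiff.mp hh).2), if_neg h2, mul_zero]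
        · rw [if_neg (fun hh => h1 (hiff.mp hh).1), if_neg (fun hh => h1 hh.symm), zero_mul]
    | succ j ih =>
      obtain ⟨ih1, ih2⟩ := ih
      have part1 : ∀ v : V₁, q G (j+1) (i₁ v) = q G₁ (j+1) v := by
        intro v
        rw [q_succ, split (fun x => q G j x * step G x (i₁ v))]
        have hz : ∑ w : {w : V₂ // w ≠ G₂.root},
            q G j (i₂ w.1) * step G (i₂ w.1) (i₁ v) = 0 :=
          Finset.sum_eq_zero fun w _ => by rw [hstep21 w.1 v w.2, mul_zero]
        rw [hz, add_zero, q_succ]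
        exact Finset.sum_congr rfl fun u _ => by rw [ih1 u, hstep₁ u v]
      refine ⟨part1, ?_⟩
      intro w
      rw [q_succ, split (fun x => q G j x * step G x (i₂ w))]
      by_cases hw : w = G₂.root
      · subst hw
        have hz : ∑ w' : {w' : V₂ // w' ≠ G₂.root},
            q G j (i₂ w'.1) * step G (i₂ w'.1) (i₂ G₂.root) = 0 :=
          Finset.sum_eq_zero fun w' _ => by
            rw [hstep₂, step_eq_zero_of_adj (h₂.2.1 w'.1), mul_zero]
        rw [hz, add_zero]
        have h1 : ∑ u : V₁, q G j (i₁ u) * step G (i₁ u) (i₂ G₂.root) = q G₁ (j+1) ℓ := by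
          rw [q_succ]
          exact Finset.sum_congr rfl fun u _ => by rw [ih1 u, ← hIR, hstep₁ u ℓ]
        rw [h1, Finset.Nat.sum_antidiagonal_succ']
        have hz2 : ∑ p ∈ Finset.HasAntidiagonal.antidiagonal j, q G₁ p.1 ℓ * q G₂ (p.2 + 1) G₂.root = 0 :=
          Finset.sum_eq_zero fun p _ => by
            rw [q2root (p.2 + 1), if_neg (Nat.succ_ne_zero p.2), mul_zero]
        rw [hz2, add_zero, q2root 0, if_pos rfl, mul_one]
      · have h1 : ∑ u : V₁, q G j (i₁ u) * step G (i₁ u) (i₂ w)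
            = q G₁ j ℓ * step G₂ G₂.root w := by
          rw [Finset.sum_eq_single_of_mem ℓ (Finset.mem_univ ℓ)
            (fun u _ hu => by rw [hstep12 u w hu hw, mul_zero])]
          rw [ih1 ℓ, hIR, hstep₂]
        have h2 : ∑ w' : {w' : V₂ // w' ≠ G₂.root},
              q G j (i₂ w'.1) * step G (i₂ w'.1) (i₂ w)
            = ∑ w' : {w' : V₂ // w' ≠ G₂.root},
              (∑ p ∈ Finset.HasAntidiagonal.antidiagonal j, q G₁ p.1 ℓ * q G₂ p.2 w'.1) * step G₂ w'.1 w :=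
          Finset.sum_congr rfl fun w' _ => by rw [ih2 w'.1, hstep₂]
        rw [h1, h2]
        have hroot_term : (∑ p ∈ Finset.HasAntidiagonal.antidiagonal j, q G₁ p.1 ℓ * q G₂ p.2 G₂.root)
            = q G₁ j ℓ := by
          rw [Finset.sum_eq_single_of_mem (j, 0)
            (Finset.HasAntidiagonal.mem_antidiagonal.mpr (by simp)) ?_]
          · rw [q2root 0, if_pos rfl, mul_one]
          · intro p hp hne
            have hs := Finset.HasAntidiagonal.mem_antidiagonal.mp hp
            have hp2 : p.2 ≠ 0 := by
              intro h0
              exact hne (Prod.ext (by omega) h0)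
            rw [q2root p.2, if_neg hp2, mul_zero]
        have hcomb : q G₁ j ℓ * step G₂ G₂.root w
              + (∑ w' : {w' : V₂ // w' ≠ G₂.root},
                  (∑ p ∈ Finset.HasAntidiagonal.antidiagonal j, q G₁ p.1 ℓ * q G₂ p.2 w'.1) * step G₂ w'.1 w)
            = ∑ w' : V₂,
                (∑ p ∈ Finset.HasAntidiagonal.antidiagonal j, q G₁ p.1 ℓ * q G₂ p.2 w') * step G₂ w' w := by
          rw [sum_split_ne G₂.root
            (fun w' => (∑ p ∈ Finset.HasAntidiagonal.antidiagonal j, q G₁ p.1 ℓ * q G₂ p.2 w') * step G₂ w' w)]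
          rw [hroot_term]
        rw [hcomb, Finset.Nat.sum_antidiagonal_succ']
        have hz0 : q G₂ 0 w = 0 := by
          rw [q_zero, if_neg hw]
        rw [hz0, mul_zero, zero_add]
        have hswap : ∑ p ∈ Finset.HasAntidiagonal.antidiagonal j, q G₁ p.1 ℓ * q G₂ (p.2 + 1) w
            = ∑ p ∈ Finset.HasAntidiagonal.antidiagonal j, ∑ w' : V₂,
                (q G₁ p.1 ℓ * q G₂ p.2 w') * step G₂ w' w :=
          Finset.sum_congr rfl fun p _ => by
            rw [q_succ, Finset.mul_sum]
            exact Finset.sum_congr rfl fun w' _ => by ring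
        rw [hswap, Finset.sum_comm]
        exact Finset.sum_congr rfl fun w' _ => by rw [Finset.sum_mul]
  have hN2pos : 0 < Fintype.card V₂ := Fintype.card_pos_iff.mpr ⟨G₂.root⟩
  have hN1 : Fintype.card V₁ ≤ Fintype.card V := by omega
  refine ⟨?_, ?_, ?_, ?_⟩
  · intro v
    rw [pvisit_eq_sum_q, pvisit_eq_sum_q G₁ v,
      Finset.sum_congr rfl fun j (_ : j ∈ Finset.range (Fintype.card V)) => (main j).1 v]
    exact sum_range_extend (fun j hj => q_eq_zero_of_card_le h₁.1 hj v) hN1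
  · intro w
    rw [pvisit_eq_sum_q, pvisit_eq_sum_q G₁ ℓ, pvisit_eq_sum_q G₂ w,
      Finset.sum_congr rfl fun j (_ : j ∈ Finset.range (Fintype.card V)) => (main j).2 w]
    exact cauchy_finite (fun j hj => q_eq_zero_of_card_le h₁.1 hj ℓ)
      (fun j hj => q_eq_zero_of_card_le h₂.1 hj w) (by omega)
  · intro v hv
    unfold IsLeaf
    rw [hout₁ v hv]
  · intro w
    unfold IsLeaf
    rw [hout₂ w]

open Classical in
lemma B2_eq_sum_ite (G : Net V) :
    B2 G = - ∑ x, if IsLeaf G x then pvisit G x * Real.logb 2 (pvisit G x) else 0 := by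
  unfold B2
  rw [Finset.sum_filter]

open Classical in
lemma sum_leaf_pvisit_ite (G : Net V)
    (hac : ∀ v, ¬ Relation.TransGen (fun a b => 0 < G.adj a b) v v) :
    ∑ v, (if IsLeaf G v then pvisit G v else 0) = 1 := by
  rw [← Finset.sum_filter]
  exact sum_leaf_pvisit G hac


/-- **Grafting property.**  If `G` is obtained from the disjoint union of `G₁` and `G₂`
by identifying a leaf `ℓ` of `G₁` with the root of `G₂` (this identification being
described by the injections `i₁`, `i₂`), then `B₂(G) = B₂(G₁) + p_ℓ B₂(G₂)`. -/
theorem B2_grafting {V₁ V₂ V : Type*} [Fintype V₁] [Fintype V₂] [Fintype V]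
    (G₁ : Net V₁) (G₂ : Net V₂) (G : Net V)
    (h₁ : IsPhylo G₁) (h₂ : IsPhylo G₂)
    (ℓ : V₁) (hℓ : IsLeaf G₁ ℓ)
    (i₁ : V₁ → V) (i₂ : V₂ → V)
    (hi₁ : Function.Injective i₁) (hi₂ : Function.Injective i₂)
    (hcov : ∀ v : V, (∃ u, i₁ u = v) ∨ ∃ u, i₂ u = v)
    (hglue : ∀ u₁ u₂, i₁ u₁ = i₂ u₂ ↔ u₁ = ℓ ∧ u₂ = G₂.root)
    (hroot : G.root = i₁ G₁.root)
    (hadj₁ : ∀ u v, G.adj (i₁ u) (i₁ v) = G₁.adj u v)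
    (hadj₂ : ∀ u v, G.adj (i₂ u) (i₂ v) = G₂.adj u v)
    (hedges : ∀ a b, 0 < G.adj a b →
      ((∃ u, i₁ u = a) ∧ ∃ v, i₁ v = b) ∨ ((∃ u, i₂ u = a) ∧ ∃ v, i₂ v = b)) :
    B2 G = B2 G₁ + pvisit G₁ ℓ * B2 G₂ := by
  classical
  obtain ⟨P1, P2, L1, L2⟩ := glue_main G₁ G₂ G h₁ h₂ ℓ hℓ i₁ i₂ hi₁ hi₂ hcov hglue
    hroot hadj₁ hadj₂ hedges
  have split := glue_sum_split ℓ G₂.root i₁ i₂ hi₁ hi₂ hcov hglue (M := ℝ)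
  have hIR : i₁ ℓ = i₂ G₂.root := (hglue ℓ G₂.root).mpr ⟨rfl, rfl⟩
  have hpℓ : 0 ≤ pvisit G₁ ℓ := pvisit_nonneg G₁ ℓ
  -- notation
  set pℓ := pvisit G₁ ℓ with hpl
  -- the three entropy sums
  have hA : B2 G₁ = - ∑ v : V₁,
      (if IsLeaf G₁ v then pvisit G₁ v * Real.logb 2 (pvisit G₁ v) else 0) :=
    B2_eq_sum_ite G₁
  have hBb : B2 G₂ = - ∑ w : V₂,
      (if IsLeaf G₂ w then pvisit G₂ w * Real.logb 2 (pvisit G₂ w) else 0) :=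
    B2_eq_sum_ite G₂
  have hG : B2 G = - ∑ x : V,
      (if IsLeaf G x then pvisit G x * Real.logb 2 (pvisit G x) else 0) :=
    B2_eq_sum_ite G
  -- split the sum over V
  rw [hG, split (fun x => if IsLeaf G x then pvisit G x * Real.logb 2 (pvisit G x) else 0)]
  -- the V₁-indexed part, split at ℓ
  rw [sum_split_ne ℓ (fun v : V₁ =>
    if IsLeaf G (i₁ v) then pvisit G (i₁ v) * Real.logb 2 (pvisit G (i₁ v)) else 0)]
  -- rewrite the v ≠ ℓ part
  have e1 : ∑ v : {v : V₁ // v ≠ ℓ},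
      (if IsLeaf G (i₁ v.1) then pvisit G (i₁ v.1) * Real.logb 2 (pvisit G (i₁ v.1)) else 0)
      = ∑ v : {v : V₁ // v ≠ ℓ},
      (if IsLeaf G₁ v.1 then pvisit G₁ v.1 * Real.logb 2 (pvisit G₁ v.1) else 0) :=
    Finset.sum_congr rfl fun v _ => by
      rw [P1 v.1]
      exact if_congr (L1 v.1 v.2) rfl rfl
  rw [e1]
  -- rewrite the ℓ term
  have e2 : (if IsLeaf G (i₁ ℓ) then pvisit G (i₁ ℓ) * Real.logb 2 (pvisit G (i₁ ℓ)) else 0)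
      = (if IsLeaf G₂ G₂.root then
          (pℓ * pvisit G₂ G₂.root) * Real.logb 2 (pℓ * pvisit G₂ G₂.root) else 0) := by
    rw [hIR, P2 G₂.root]
    exact if_congr (L2 G₂.root) rfl rfl
  rw [e2]
  -- rewrite the subtype-V₂ part
  have e3 : ∑ w : {w : V₂ // w ≠ G₂.root},
      (if IsLeaf G (i₂ w.1) then pvisit G (i₂ w.1) * Real.logb 2 (pvisit G (i₂ w.1)) else 0)
      = ∑ w : {w : V₂ // w ≠ G₂.root},
      (if IsLeaf G₂ w.1 then
        (pℓ * pvisit G₂ w.1) * Real.logb 2 (pℓ * pvisit G₂ w.1) else 0) :=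
    Finset.sum_congr rfl fun w _ => by
      rw [P2 w.1]
      exact if_congr (L2 w.1) rfl rfl
  rw [e3]
  -- recombine the V₂ pieces into a full sum over V₂
  have e4 : (if IsLeaf G₂ G₂.root then
        (pℓ * pvisit G₂ G₂.root) * Real.logb 2 (pℓ * pvisit G₂ G₂.root) else 0)
      + (∑ w : {w : V₂ // w ≠ G₂.root},
        (if IsLeaf G₂ w.1 then
          (pℓ * pvisit G₂ w.1) * Real.logb 2 (pℓ * pvisit G₂ w.1) else 0))
      = ∑ w : V₂, (if IsLeaf G₂ w then
          (pℓ * pvisit G₂ w) * Real.logb 2 (pℓ * pvisit G₂ w) else 0) :=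
    (sum_split_ne G₂.root (fun w : V₂ => if IsLeaf G₂ w then
      (pℓ * pvisit G₂ w) * Real.logb 2 (pℓ * pvisit G₂ w) else 0)).symm
  -- entropy expansion over V₂
  have e5 : ∑ w : V₂, (if IsLeaf G₂ w then
        (pℓ * pvisit G₂ w) * Real.logb 2 (pℓ * pvisit G₂ w) else 0)
      = (pℓ * Real.logb 2 pℓ) * (∑ w : V₂, if IsLeaf G₂ w then pvisit G₂ w else 0)
        + pℓ * (∑ w : V₂,
            if IsLeaf G₂ w then pvisit G₂ w * Real.logb 2 (pvisit G₂ w) else 0) := by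
    rw [Finset.mul_sum, Finset.mul_sum, ← Finset.sum_add_distrib]
    refine Finset.sum_congr rfl fun w _ => ?_
    by_cases h : IsLeaf G₂ w
    · rw [if_pos h, if_pos h, if_pos h]
      rw [phi_mul hpℓ (pvisit_nonneg G₂ w)]
      ring
    · rw [if_neg h, if_neg h, if_neg h]
      ring
  -- conservation in G₂
  have e6 : (∑ w : V₂, if IsLeaf G₂ w then pvisit G₂ w else 0) = 1 :=
    sum_leaf_pvisit_ite G₂ h₂.1
  -- the V₁ sum split at ℓ
  have e7 : ∑ v : V₁, (if IsLeaf G₁ v then pvisit G₁ v * Real.logb 2 (pvisit G₁ v) else 0)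
      = (pℓ * Real.logb 2 pℓ)
        + ∑ v : {v : V₁ // v ≠ ℓ},
          (if IsLeaf G₁ v.1 then pvisit G₁ v.1 * Real.logb 2 (pvisit G₁ v.1) else 0) := by
    rw [sum_split_ne ℓ (fun v : V₁ =>
      if IsLeaf G₁ v then pvisit G₁ v * Real.logb 2 (pvisit G₁ v) else 0)]
    rw [if_pos hℓ]
  rw [hA, hBb]
  rw [e7]
  have := e4
  rw [e5, e6] at this
  linarith [this]


end GalledB2
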